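/- Let V be an r-dimensional L-vector space and let U be an h-scattered K-subspace of V with (h+1)·dim_K U = r·n (i.e., U is a maximum h-scattered subspace of dimension rn/(h+1)). Then for every (r−1)-dimensional L-subspace W of V one has r·n/(h+1) − n ≤ dim_K(U ∩ W) ≤ r·n/(h+1) − n + h. -/

import Mathlib

def IsHScattered (K L V : Type*) [Field K] [Field L] [Algebra K L]
    [AddCommGroup V] [Module L V] [Module K V] [IsScalarTower K L V]
    (h : ℕ) (U : Submodule K V) : Prop :=
  Submodule.span L (U : Set V) = ⊤ ∧
  ∀ S : Submodule L V, Module.finrank L S = h →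
    Module.finrank K ↥(U ⊓ S.restrictScalars K) ≤ h

open Module Submodule

set_option linter.unusedSectionVars false
set_option maxHeartbeats 1000000


section Ext
variable {K V : Type*} [Field K] [AddCommGroup V] [Module K V] [FiniteDimensional K V]

lemma aux_exists_finrank_eq_of_le (W : Submodule K V) (m : ℕ) (h1 : finrank K W ≤ m)
    (h2 : m ≤ finrank K V) : ∃ W' : Submodule K V, W ≤ W' ∧ finrank K W' = m := by
  induction m with
  | zero =>
    exact ⟨W, le_rfl, Nat.le_antisymm h1 (Nat.zero_le _)⟩
  | succ m ih =>
    rcases Nat.lt_or_ge (finrank K W) (m+1) with hlt | hge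
    · obtain ⟨W', hWW', hW'⟩ := ih (Nat.lt_succ_iff.mp hlt) (Nat.le_of_succ_le h2)
      have hfr : finrank K W' < finrank K V := lt_of_lt_of_le (by omega) h2
      obtain ⟨v, hv⟩ := W'.exists_of_finrank_lt hfr
      have hv1 : v ∉ W' := by simpa using hv 1 one_ne_zero
      have hv0 : v ≠ 0 := fun h => hv1 (h ▸ W'.zero_mem)
      refine ⟨W' ⊔ K ∙ v, le_trans hWW' le_sup_left, ?_⟩
      have hinf : W' ⊓ (K ∙ v) = ⊥ := by
        rw [eq_bot_iff]
        rintro x ⟨hxW, hxv⟩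
        obtain ⟨c, rfl⟩ := Submodule.mem_span_singleton.mp hxv
        rcases eq_or_ne c 0 with rfl | hc
        · simp
        · exact absurd hxW (hv c hc)
      have := Submodule.finrank_sup_add_finrank_inf_eq W' (K ∙ v)
      rw [hinf, finrank_bot, finrank_span_singleton hv0] at this
      omega
    · exact ⟨W, le_rfl, Nat.le_antisymm h1 hge⟩
end Ext

section Pair
variable (K L : Type*) [Field K] [Field L] [Algebra K L] [FiniteDimensional K L]

noncomputable def tfun : L →ₗ[K] K :=
  (Module.finBasis K L).coord ⟨0, Module.finrank_pos⟩

lemma tfun_nondeg (x : L) (hx : x ≠ 0) : ∃ c : L, tfun K L (x * c) ≠ 0 := by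
  refine ⟨x⁻¹ * Module.finBasis K L ⟨0, Module.finrank_pos⟩, ?_⟩
  rw [← mul_assoc, mul_inv_cancel₀ hx, one_mul]
  simp [tfun]

variable {M : Type*} [AddCommGroup M] [Module K M] {k : ℕ} (b : Basis (Fin k) K M)

noncomputable def pr : (M →ₗ[K] L) →ₗ[K] (M →ₗ[K] L) →ₗ[K] K :=
  LinearMap.mk₂ K (fun α β => tfun K L (∑ i, α (b i) * β (b i)))
    (fun α α' β => by
      show tfun K L (∑ i, (α + α') (b i) * β (b i)) =
        tfun K L (∑ i, α (b i) * β (b i)) + tfun K L (∑ i, α' (b i) * β (b i))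
      rw [← map_add]; congr 1; rw [← Finset.sum_add_distrib]
      exact Finset.sum_congr rfl fun i _ => by simp [add_mul])
    (fun c α β => by
      show tfun K L (∑ i, (c • α) (b i) * β (b i)) = c • tfun K L (∑ i, α (b i) * β (b i))
      rw [← map_smul]; congr 1; rw [Finset.smul_sum]
      exact Finset.sum_congr rfl fun i _ => by simp [smul_mul_assoc])
    (fun α β β' => by
      show tfun K L (∑ i, α (b i) * (β + β') (b i)) =
        tfun K L (∑ i, α (b i) * β (b i)) + tfun K L (∑ i, α (b i) * β' (b i))
      rw [← map_add]; congr 1; rw [← Finset.sum_add_distrib]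
      exact Finset.sum_congr rfl fun i _ => by simp [mul_add])
    (fun c α β => by
      show tfun K L (∑ i, α (b i) * (c • β) (b i)) = c • tfun K L (∑ i, α (b i) * β (b i))
      rw [← map_smul]; congr 1; rw [Finset.smul_sum]
      exact Finset.sum_congr rfl fun i _ => by simp [mul_smul_comm])

lemma pr_apply (α β : M →ₗ[K] L) : pr K L b α β = tfun K L (∑ i, α (b i) * β (b i)) := rfl

lemma pr_symm (α β : M →ₗ[K] L) : pr K L b α β = pr K L b β α := by
  rw [pr_apply, pr_apply]
  congr 1
  exact Finset.sum_congr rfl fun i _ => mul_comm _ _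

lemma pr_nondeg (α : M →ₗ[K] L) (hα : ∀ β, pr K L b α β = 0) : α = 0 := by
  refine Basis.ext b fun j => ?_
  by_contra hne
  obtain ⟨c, hc⟩ := tfun_nondeg K L _ hne
  apply hc
  have := hα (b.constr K (Pi.single j c))
  rw [pr_apply] at this
  simpa [Basis.constr_basis, Pi.single_apply, mul_ite, Finset.sum_ite_eq'] using this

end Pair

lemma aux_tower {K L X : Type*} [Field K] [Field L] [Algebra K L] [FiniteDimensional K L]
    [AddCommGroup X] [Module K X] [Module L X] [IsScalarTower K L X]
    [FiniteDimensional L X] : finrank K X = finrank L X * finrank K L := by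
  classical
  let bb := Basis.ofVectorSpace L X
  haveI : Fintype (Basis.ofVectorSpaceIndex L X) := FiniteDimensional.fintypeBasisIndex bb
  have hcard : Fintype.card (Basis.ofVectorSpaceIndex L X) = finrank L X :=
    (Module.finrank_eq_card_basis bb).symm
  let e : X ≃ₗ[K] (Basis.ofVectorSpaceIndex L X → L) :=
    (bb.equivFun : X ≃ₗ[L] _).restrictScalars K
  rw [e.finrank_eq, Module.finrank_pi_fintype, Finset.sum_const, smul_eq_mul, ← hcard,
    Finset.card_univ]

section Main
variable {K L V : Type*} [Field K] [Field L] [Algebra K L] [AddCommGroup V] [Module L V]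
  [Module K V] [IsScalarTower K L V] [FiniteDimensional K L] [FiniteDimensional L V]

noncomputable def resU (U : Submodule K V) : Module.Dual L V →ₗ[K] (↥U →ₗ[K] L) where
  toFun φ := (φ.restrictScalars K).comp U.subtype
  map_add' _ _ := rfl
  map_smul' _ _ := rfl

lemma resU_apply (U : Submodule K V) (φ : Module.Dual L V) (u : ↥U) :
    resU U φ u = φ u := rfl

lemma resU_eq_zero (U : Submodule K V) (hspan : span L (U : Set V) = ⊤)
    (φ : Module.Dual L V) (hφ : resU U φ = 0) : φ = 0 := by
  have : span L (U : Set V) ≤ LinearMap.ker φ := by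
    rw [span_le]
    intro x hx
    simpa [resU_apply] using LinearMap.congr_fun hφ ⟨x, hx⟩
  rw [hspan, top_le_iff, LinearMap.ker_eq_top] at this
  exact this

-- dualAnnihilator dimension
lemma aux_ann_dim {F W : Type*} [Field F] [AddCommGroup W] [Module F W] [FiniteDimensional F W]
    (S : Subspace F W) : finrank F S.dualAnnihilator + finrank F S = finrank F W := by
  rw [← LinearEquiv.finrank_eq S.quotEquivAnnihilator]
  exact Submodule.finrank_quotient_add_finrank S

lemma step1 {h : ℕ} (U : Submodule K V) (hU : IsHScattered K L V h U)
    (hh : h ≤ finrank L V) (Y : Submodule K ↥U) (hY : finrank K Y = h + 1)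
    (ψ : ↥U →ₗ[K] L) : ∃ φ : Module.Dual L V, ∀ y ∈ Y, resU U φ y = ψ y := by
  haveI : FiniteDimensional K V := Module.Finite.trans L V
  classical
  set YV : Submodule K V := Y.map U.subtype with hYV
  have hYVrank : finrank K YV = h + 1 := by
    rw [← hY]
    exact (LinearEquiv.finrank_eq (Submodule.equivMapOfInjective U.subtype
      (Submodule.injective_subtype U) Y)).symm
  set SY : Submodule L V := span L (YV : Set V) with hSY
  -- spanning family for SY over L of size h+1
  have hbY := Module.finBasis K ↥YV
  set v : Fin (finrank K ↥YV) → V := fun i => ((hbY i : ↥YV) : V) with hv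
  have hSYv : SY = span L (Set.range v) := by
    apply le_antisymm
    · rw [hSY, span_le]
      intro x hx
      have hx2 : (⟨x, hx⟩ : ↥YV) ∈ span K (Set.range hbY) := by
        rw [hbY.span_eq]; trivial
      have := Submodule.span_le_restrictScalars K L (Set.range v)
      refine this ?_
      have : x ∈ (span K (Set.range hbY)).map YV.subtype := ⟨⟨x, hx⟩, hx2, rfl⟩
      rw [Submodule.map_span] at this
      have himg : YV.subtype '' Set.range hbY = Set.range v := by
        ext z; simp [hv]
      rwa [himg] at this
    · rw [span_le]
      rintro z ⟨i, rfl⟩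
      exact subset_span (hbY i).2
  have hSYle : finrank L SY ≤ h + 1 := by
    rw [hSYv]
    have h1 := finrank_span_le_card (R := L) (M := V) (Set.range v)
    have h2 : (Set.range v).toFinset.card ≤ finrank K ↥YV := by
      rw [Set.toFinset_card]; simpa using Fintype.card_range_le v
    omega
  have hSYge : h + 1 ≤ finrank L SY := by
    by_contra hcon
    push_neg at hcon
    obtain ⟨S, hSYS, hSrank⟩ := aux_exists_finrank_eq_of_le SY h (by omega) hh
    have hle : YV ≤ U ⊓ S.restrictScalars K := by
      refine le_inf (Submodule.map_subtype_le U Y) ?_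
      intro x hx
      exact hSYS (subset_span hx)
    have := Submodule.finrank_mono hle
    rw [hYVrank] at this
    have := hU.2 S hSrank
    omega
  have hSYrank : finrank L SY = h + 1 := le_antisymm hSYle hSYge
  -- restriction to Y
  set resY : Module.Dual L V →ₗ[K] (↥Y →ₗ[K] L) :=
    { toFun := fun φ => (resU U φ).comp Y.subtype
      map_add' := fun _ _ => rfl
      map_smul' := fun _ _ => rfl } with hresY
  have hker : LinearMap.ker resY = (SY.dualAnnihilator).restrictScalars K := by
    ext φ
    simp only [LinearMap.mem_ker, Submodule.restrictScalars_mem, Submodule.mem_dualAnnihilator]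
    constructor
    · intro h0 w hw
      have hsub : SY ≤ LinearMap.ker φ := by
        rw [hSY, span_le]
        rintro x ⟨y, hy, rfl⟩
        have := LinearMap.congr_fun h0 ⟨y, hy⟩
        exact LinearMap.mem_ker.mpr this
      exact hsub hw
    · intro h0
      ext y
      have : ((y : ↥U) : V) ∈ SY := subset_span ⟨y, y.2, rfl⟩
      exact h0 _ this
  -- dimension count
  have hn : finrank K (Module.Dual L V) = finrank L V * finrank K L := by
    rw [aux_tower (K := K) (L := L), Subspace.dual_finrank_eq]
  have hkerdim : finrank K (LinearMap.ker resY) = (finrank L V - (h+1)) * finrank K L := by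
    rw [hker]
    have heq : finrank K ↥((SY.dualAnnihilator).restrictScalars K)
        = finrank K ↥SY.dualAnnihilator := rfl
    rw [heq, aux_tower (K := K) (L := L) (X := ↥SY.dualAnnihilator)]
    congr 1
    have := aux_ann_dim (F := L) (W := V) SY
    rw [hSYrank] at this
    omega
  have hrange : LinearMap.range resY = ⊤ := by
    apply Submodule.eq_top_of_finrank_eq
    have hrn := LinearMap.finrank_range_add_finrank_ker resY
    rw [hkerdim, hn] at hrn
    have htarget : finrank K (↥Y →ₗ[K] L) = (h+1) * finrank K L := by
      rw [Module.finrank_linearMap, hY]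
    rw [htarget]
    have hle' : h + 1 ≤ finrank L V := by
      have := SY.finrank_le
      omega
    have expand : (h+1) * finrank K L + (finrank L V - (h+1)) * finrank K L
        = finrank L V * finrank K L := by
      rw [← Nat.add_mul]
      congr 1
      omega
    omega
  obtain ⟨φ, hφ⟩ := (LinearMap.range_eq_top.mp hrange) (ψ.comp Y.subtype)
  refine ⟨φ, fun y hy => ?_⟩
  have := LinearMap.congr_fun hφ ⟨y, hy⟩
  exact this



theorem main_upper {h : ℕ} (U : Submodule K V) (hU : IsHScattered K L V h U)
    (hr1 : h + 1 ≤ finrank L V)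
    (hdim : (h + 1) * finrank K ↥U = finrank L V * finrank K L)
    (φ : Module.Dual L V) (hφ : φ ≠ 0) :
    finrank K ↥(LinearMap.ker (resU U φ)) + finrank K L ≤ finrank K ↥U + h := by
  haveI : FiniteDimensional K V := Module.Finite.trans L V
  classical
  by_contra hcon
  push_neg at hcon
  -- notation
  have hnpos : 0 < finrank K L := Module.finrank_pos
  -- r ≤ k
  have hrk : finrank L V ≤ finrank K ↥U := by
    let bU := Module.finBasis K ↥U
    have hspan2 : span L (Set.range (fun i => ((bU i : ↥U) : V))) = ⊤ := by
      rw [← top_le_iff, ← hU.1, span_le]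
      intro x hx
      have hx2 : (⟨x, hx⟩ : ↥U) ∈ span K (Set.range bU) := by
        rw [bU.span_eq]; trivial
      have hmap : x ∈ (span K (Set.range bU)).map U.subtype := ⟨⟨x, hx⟩, hx2, rfl⟩
      rw [Submodule.map_span] at hmap
      have himg : U.subtype '' Set.range bU = Set.range (fun i => ((bU i : ↥U) : V)) := by
        ext z; simp
      rw [himg] at hmap
      exact Submodule.span_le_restrictScalars K L _ hmap
    have := finrank_le_of_span_eq_top hspan2
    simpa using this
  have hkpos : 0 < finrank K ↥U := by omega
  have hhn : h + 1 ≤ finrank K L := by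
    have h1 : (h+1) * finrank K ↥U ≤ finrank K L * finrank K ↥U := by
      rw [hdim, Nat.mul_comm (finrank K L) (finrank K ↥U)]
      exact Nat.mul_le_mul_right _ hrk
    exact Nat.le_of_mul_le_mul_right h1 hkpos
  have hnk : finrank K L ≤ finrank K ↥U := by
    have h1 : (h+1) * finrank K L ≤ (h+1) * finrank K ↥U := by
      rw [hdim]
      exact Nat.mul_le_mul_right _ hr1
    exact Nat.le_of_mul_le_mul_left h1 (by omega)
  -- α and its rank
  set α := resU U φ with hα
  have hrn := LinearMap.finrank_range_add_finrank_ker α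
  have hρ : finrank K (LinearMap.range α) + (h + 1) ≤ finrank K L := by omega
  -- the pairing
  let b := Module.finBasis K ↥U
  have hinj : Function.Injective (resU (L := L) U) := by
    intro x y hxy
    have hs : resU (L := L) U (x - y) = 0 := by rw [(resU (L := L) U).map_sub, hxy, sub_self]
    have := resU_eq_zero U hU.1 _ hs
    rwa [sub_eq_zero] at this
  set C : Submodule K (↥U →ₗ[K] L) := LinearMap.range (resU U) with hC
  have hCdim : finrank K C = finrank L V * finrank K L := by
    rw [hC, LinearMap.finrank_range_of_inj hinj, aux_tower (K := K) (L := L),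
      Subspace.dual_finrank_eq]
  have hαC : α ∈ C := ⟨φ, rfl⟩
  set P := pr K L (M := ↥U) b with hP
  have hPker : ∀ γ, P γ = 0 → γ = 0 := by
    intro γ hγ
    exact pr_nondeg K L b γ (fun β => by rw [hγ]; rfl)
  have hPinj : Function.Injective P := by
    intro x y hxy
    have hs : P (x - y) = 0 := by rw [map_sub, hxy, sub_self]
    have := hPker _ hs
    rwa [sub_eq_zero] at this
  have hPsurj : Function.Surjective P := by
    have h1 : finrank K (LinearMap.range P) = finrank K (Module.Dual K (↥U →ₗ[K] L)) := by
      rw [LinearMap.finrank_range_of_inj hPinj, Subspace.dual_finrank_eq]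
    rw [← LinearMap.range_eq_top]
    exact Submodule.eq_top_of_finrank_eq h1
  let Pe : (↥U →ₗ[K] L) ≃ₗ[K] Module.Dual K (↥U →ₗ[K] L) :=
    LinearEquiv.ofBijective P ⟨hPinj, hPsurj⟩
  set D : Submodule K (↥U →ₗ[K] L) := Submodule.comap P C.dualAnnihilator with hDdef
  have hD : ∀ β ∈ D, ∀ γ ∈ C, P β γ = 0 := by
    intro β hβ γ hγ
    rw [hDdef, Submodule.mem_comap, Submodule.mem_dualAnnihilator] at hβ
    exact hβ γ hγ
  have hDmem : ∀ β, (∀ γ ∈ C, P β γ = 0) → β ∈ D := by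
    intro β hβ
    rw [hDdef, Submodule.mem_comap, Submodule.mem_dualAnnihilator]
    exact hβ
  have hDdim : finrank K D + finrank L V * finrank K L
      = finrank K ↥U * finrank K L := by
    have he : finrank K D = finrank K C.dualAnnihilator := by
      have : D = Submodule.comap (Pe : (↥U →ₗ[K] L) →ₗ[K] Module.Dual K (↥U →ₗ[K] L))
          C.dualAnnihilator := rfl
      rw [this]
      exact LinearEquiv.finrank_eq (LinearEquiv.ofSubmodule' Pe C.dualAnnihilator)
    have h2 := aux_ann_dim (F := K) C
    have hE : finrank K (↥U →ₗ[K] L) = finrank K ↥U * finrank K L := by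
      rw [Module.finrank_linearMap]
    omega
  -- Step 2 : min rank of D
  have Dmin : ∀ β ∈ D, finrank K (LinearMap.range β) ≤ h + 1 → β = 0 := by
    intro β hβD hβrk
    by_contra hβ0
    let bI := Module.finBasis K ↥(LinearMap.range β)
    let βI : ↥U →ₗ[K] ↥(LinearMap.range β) := β.rangeRestrict
    let c : Fin (finrank K ↥(LinearMap.range β)) → (↥U →ₗ[K] K) :=
      fun j => (bI.coord j).comp βI
    have hrep : ∀ u : ↥U, β u = ∑ j, c j u • (bI j : L) := by
      intro u
      have h1 := bI.sum_repr (βI u)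
      have h2 : ((βI u : ↥(LinearMap.range β)) : L) = β u := rfl
      rw [← h2, ← h1]
      push_cast
      rfl
    let w : Fin (finrank K ↥(LinearMap.range β)) → ↥U := fun j => ∑ i, c j (b i) • b i
    have claimA : ∀ ψ : ↥U →ₗ[K] L,
        P ψ β = tfun K L (∑ j, ψ (w j) * (bI j : L)) := by
      intro ψ
      rw [hP, pr_apply]
      congr 1
      calc ∑ i, ψ (b i) * β (b i)
          = ∑ i, ∑ j, c j (b i) • (ψ (b i) * (bI j : L)) := by
            refine Finset.sum_congr rfl fun i _ => ?_
            rw [hrep (b i), Finset.mul_sum]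
            exact Finset.sum_congr rfl fun j _ => (mul_smul_comm _ _ _)
        _ = ∑ j, ∑ i, c j (b i) • (ψ (b i) * (bI j : L)) := Finset.sum_comm
        _ = ∑ j, ψ (w j) * (bI j : L) := by
            refine Finset.sum_congr rfl fun j _ => ?_
            have hw : ψ (w j) = ∑ i, c j (b i) • ψ (b i) := by
              simp only [w, map_sum, map_smul]
            rw [hw, Finset.sum_mul]
            exact Finset.sum_congr rfl fun i _ => (smul_mul_assoc _ _ _).symm
    have hψ0 : ∃ ψ0 : ↥U →ₗ[K] L, P ψ0 β ≠ 0 := by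
      by_contra hall
      push_neg at hall
      exact hβ0 (pr_nondeg K L b β (fun γ => by rw [pr_symm]; exact hall γ))
    obtain ⟨ψ0, hψ0⟩ := hψ0
    have hWsp : finrank K (span K (Set.range w)) ≤ h + 1 := by
      have h1 := finrank_span_le_card (R := K) (M := ↥U) (Set.range w)
      have h2 : (Set.range w).toFinset.card ≤ finrank K ↥(LinearMap.range β) := by
        rw [Set.toFinset_card]
        simpa using Fintype.card_range_le w
      omega
    obtain ⟨Yx, hWY, hYx⟩ := aux_exists_finrank_eq_of_le (span K (Set.range w)) (h+1) hWsp
      (by omega)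
    obtain ⟨φ', hφ'⟩ := step1 U hU (by omega) Yx hYx ψ0
    have hαw : ∀ j, (resU U φ') (w j) = ψ0 (w j) := fun j =>
      hφ' _ (hWY (subset_span ⟨j, rfl⟩))
    have heq2 : P (resU U φ') β = P ψ0 β := by
      rw [claimA, claimA]
      congr 1
      exact Finset.sum_congr rfl fun j _ => by rw [hαw j]
    have hmem : resU U φ' ∈ C := ⟨φ', rfl⟩
    have hz := hD β hβD _ hmem
    rw [hP, pr_symm] at hz
    rw [← hP] at hz
    rw [heq2] at hz
    exact hψ0 hz
  -- extend range α to S of dim n - (h+1)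
  obtain ⟨S, hrangeS, hSdim⟩ := aux_exists_finrank_eq_of_le (LinearMap.range α)
    (finrank K L - (h+1)) (by omega) (by omega)
  -- q : L → Dual K L
  let q : L →ₗ[K] Module.Dual K L :=
    LinearMap.mk₂ K (fun μ x => tfun K L (x * μ))
      (fun μ μ' x => by
        show tfun K L (x * (μ + μ')) = tfun K L (x * μ) + tfun K L (x * μ')
        rw [mul_add, map_add])
      (fun a μ x => by
        show tfun K L (x * (a • μ)) = a • tfun K L (x * μ)
        rw [mul_smul_comm, map_smul])
      (fun μ x x' => by
        show tfun K L ((x + x') * μ) = tfun K L (x * μ) + tfun K L (x' * μ)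
        rw [add_mul, map_add])
      (fun a μ x => by
        show tfun K L ((a • x) * μ) = a • tfun K L (x * μ)
        rw [smul_mul_assoc, map_smul])
  have hq : ∀ μ x, q μ x = tfun K L (x * μ) := fun μ x => rfl
  have hqinj : Function.Injective q := by
    intro x y hxy
    by_contra hne
    have hsub : x - y ≠ 0 := fun hs => hne (by rwa [sub_eq_zero] at hs)
    obtain ⟨cc, hcc⟩ := tfun_nondeg K L _ hsub
    apply hcc
    have : q (x - y) = 0 := by rw [map_sub, hxy, sub_self]
    have h3 := LinearMap.congr_fun this cc
    rw [hq] at h3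
    rwa [mul_comm] at h3
  have hqsurj : Function.Surjective q := by
    have h1 : finrank K (LinearMap.range q) = finrank K (Module.Dual K L) := by
      rw [LinearMap.finrank_range_of_inj hqinj, Subspace.dual_finrank_eq]
    rw [← LinearMap.range_eq_top]
    exact Submodule.eq_top_of_finrank_eq h1
  let qe : L ≃ₗ[K] Module.Dual K L := LinearEquiv.ofBijective q ⟨hqinj, hqsurj⟩
  set T : Submodule K L := Submodule.comap q S.dualAnnihilator with hTdef
  have hT : ∀ μ ∈ T, ∀ x ∈ S, tfun K L (x * μ) = 0 := by
    intro μ hμ x hx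
    rw [hTdef, Submodule.mem_comap, Submodule.mem_dualAnnihilator] at hμ
    exact hμ x hx
  have hTdim : finrank K T = h + 1 := by
    have he : finrank K T = finrank K S.dualAnnihilator := by
      have : T = Submodule.comap (qe : L →ₗ[K] Module.Dual K L) S.dualAnnihilator := rfl
      rw [this]
      exact LinearEquiv.finrank_eq (LinearEquiv.ofSubmodule' qe S.dualAnnihilator)
    have h2 := aux_ann_dim (F := K) S
    rw [hSdim] at h2
    omega
  -- A = Hom(U, T)
  set ATmap : (↥U →ₗ[K] ↥T) →ₗ[K] (↥U →ₗ[K] L) := LinearMap.llcomp K ↥U ↥T L T.subtype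
    with hATdef
  have hATinj : Function.Injective ATmap := by
    intro γ γ' hγ
    ext u
    exact LinearMap.congr_fun hγ u
  set A : Submodule K (↥U →ₗ[K] L) := LinearMap.range ATmap with hAdef
  have hAdim : finrank K A = finrank K ↥U * (h + 1) := by
    rw [hAdef, LinearMap.finrank_range_of_inj hATinj, Module.finrank_linearMap, hTdim]
  have hAmem : ∀ γ ∈ A, ∀ u : ↥U, γ u ∈ T := by
    rintro γ ⟨γ', rfl⟩ u
    exact (γ' u).2
  have hDA : D ⊓ A = ⊥ := by
    rw [eq_bot_iff]
    rintro x ⟨hxD, hxA⟩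
    have hrange : LinearMap.range x ≤ T := by
      rintro y ⟨u, rfl⟩
      exact hAmem x hxA u
    have : finrank K (LinearMap.range x) ≤ h + 1 := by
      rw [← hTdim]
      exact Submodule.finrank_mono hrange
    have := Dmin x hxD this
    simp [this]
  have hsup : D ⊔ A = ⊤ := by
    apply Submodule.eq_top_of_finrank_eq
    have h1 := Submodule.finrank_sup_add_finrank_inf_eq D A
    rw [hDA, finrank_bot] at h1
    have h2 : finrank K (↥U →ₗ[K] L) = finrank K ↥U * finrank K L := by
      rw [Module.finrank_linearMap]
    have h3 : finrank K ↥U * (h+1) = finrank L V * finrank K L := by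
      rw [Nat.mul_comm]; exact hdim
    omega
  -- conclude α = 0
  have hzero : ∀ x : ↥U →ₗ[K] L, P α x = 0 := by
    intro x
    have hx : x ∈ D ⊔ A := by rw [hsup]; trivial
    rw [Submodule.mem_sup] at hx
    obtain ⟨βd, hβd, γa, hγa, rfl⟩ := hx
    rw [map_add]
    have hz1 : P α βd = 0 := by
      rw [hP, pr_symm, ← hP]
      exact hD βd hβd α hαC
    have hz2 : P α γa = 0 := by
      rw [hP, pr_apply, map_sum]
      apply Finset.sum_eq_zero
      intro i _
      exact hT _ (hAmem γa hγa (b i)) _ (hrangeS ⟨b i, rfl⟩)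
    rw [hz1, hz2, add_zero]
  have hαz : α = 0 := pr_nondeg K L b α (fun x => hzero x)
  exact hφ (resU_eq_zero U hU.1 φ hαz)

end Main

theorem stmt5 (n r h : ℕ) (K L V : Type*) [Field K] [Fintype K] [Field L] [Algebra K L]
    [AddCommGroup V] [Module L V] [Module K V] [IsScalarTower K L V]
    [FiniteDimensional K L] [FiniteDimensional L V]
    (hn : Module.finrank K L = n) (hr : Module.finrank L V = r)
    (h0 : 0 < h) (hhr : h ≤ r - 1)
    (U : Submodule K V) (hU : IsHScattered K L V h U)
    (hdim : (h + 1) * Module.finrank K ↥U = r * n) :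
    ∀ W : Submodule L V, Module.finrank L W = r - 1 →
      r * n / (h + 1) ≤ Module.finrank K ↥(U ⊓ W.restrictScalars K) + n ∧
      Module.finrank K ↥(U ⊓ W.restrictScalars K) + n ≤ r * n / (h + 1) + h := by
  subst hn
  subst hr
  intro W hW
  haveI : FiniteDimensional K V := Module.Finite.trans L V
  have hr1 : h + 1 ≤ finrank L V := by omega
  have hdiv : finrank L V * finrank K L / (h + 1) = finrank K ↥U := by
    rw [← hdim]
    exact Nat.mul_div_cancel_left _ (Nat.succ_pos h)
  have hWK : finrank K ↥(W.restrictScalars K) = (finrank L V - 1) * finrank K L := by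
    have h1 : finrank K ↥(W.restrictScalars K) = finrank K ↥W := rfl
    rw [h1, aux_tower (K := K) (L := L), hW]
  have hVK : finrank K V = finrank L V * finrank K L := by
    rw [aux_tower (K := K) (L := L)]
  have hexp : (finrank L V - 1) * finrank K L + finrank K L
      = finrank L V * finrank K L := by
    have h2 : finrank L V - 1 + 1 = finrank L V := by omega
    calc (finrank L V - 1) * finrank K L + finrank K L
        = (finrank L V - 1 + 1) * finrank K L := by rw [Nat.succ_mul]
      _ = finrank L V * finrank K L := by rw [h2]
  -- dimension of U ⊓ W as a submodule of ↥U
  have hdcomap : finrank K ↥(Submodule.comap U.subtype (U ⊓ W.restrictScalars K))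
      = finrank K ↥(U ⊓ W.restrictScalars K) :=
    LinearEquiv.finrank_eq (Submodule.comapSubtypeEquivOfLe inf_le_left)
  have hcomap_eq : Submodule.comap U.subtype (W.restrictScalars K)
      = Submodule.comap U.subtype (U ⊓ W.restrictScalars K) := by
    rw [Submodule.comap_inf, Submodule.comap_subtype_self, top_inf_eq]
  constructor
  · -- lower bound
    rw [hdiv]
    let qm : ↥U →ₗ[K] V ⧸ (W.restrictScalars K) :=
      ((W.restrictScalars K).mkQ).comp U.subtype
    have hker : LinearMap.ker qm = Submodule.comap U.subtype (W.restrictScalars K) := by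
      rw [LinearMap.ker_comp, Submodule.ker_mkQ]
    have hrn := LinearMap.finrank_range_add_finrank_ker qm
    rw [hker, hcomap_eq, hdcomap] at hrn
    have hq := Submodule.finrank_quotient_add_finrank (W.restrictScalars K)
    rw [hWK, hVK] at hq
    have hquot : finrank K (V ⧸ (W.restrictScalars K)) = finrank K L := by omega
    have hrange := Submodule.finrank_le (LinearMap.range qm)
    rw [hquot] at hrange
    omega
  · -- upper bound
    rw [hdiv]
    have hWann : W.dualAnnihilator ≠ ⊥ := by
      intro hbot
      have h1 := aux_ann_dim (F := L) W
      rw [hbot, hW, finrank_bot] at h1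
      omega
    obtain ⟨φ0, hφ0mem, hφ0ne⟩ := Submodule.exists_mem_ne_zero_of_ne_bot hWann
    have hmain := main_upper U hU hr1 hdim φ0 hφ0ne
    have hsub : Submodule.comap U.subtype (U ⊓ W.restrictScalars K)
        ≤ LinearMap.ker (resU U φ0) := by
      intro x hx
      rw [← hcomap_eq, Submodule.mem_comap] at hx
      have hxW : (x : V) ∈ W := hx
      have : resU U φ0 x = φ0 (x : V) := rfl
      rw [LinearMap.mem_ker, this]
      exact (Submodule.mem_dualAnnihilator φ0).mp hφ0mem _ hxW
    have hd2 := Submodule.finrank_mono hsub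
    rw [hdcomap] at hd2
    omega
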